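/- Let 0 < α < 1/2, and a, b, c ∈ ℝ. Suppose f : ℝ → ℝ is twice differentiable and satisfies (Γ(1-α)/Γ(1-2α)) f(x) = a (f''(x))² + b f'(x) f''(x) + c f(x) f''(x) - (2c/3)(f'(x))² for all x. Then u(t,x) = t^(-α) f(x) solves the time fractional dual porous medium equation ∂_t^α u = a (u_xx)² + b u_x u_xx + c[u u_xx - (2/3)(u_x)²] for t > 0, where ∂_t^α is the Riemann–Liouville fractional derivative. -/

import Mathlib

open intervalIntegral in
lemma real_beta {p q : ℝ} (hp : 0 < p) (hq : 0 < q) :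
    ∫ x in (0:ℝ)..1, x ^ (p - 1) * (1 - x) ^ (q - 1)
      = Real.Gamma p * Real.Gamma q / Real.Gamma (p + q) := by
  have h := Complex.Gamma_mul_Gamma_eq_betaIntegral (s := (p : ℂ)) (t := (q : ℂ))
    (by simpa using hp) (by simpa using hq)
  rw [Complex.betaIntegral] at h
  have hint : (∫ x in (0:ℝ)..1, (x : ℂ) ^ ((p : ℂ) - 1) * ((1 : ℂ) - x) ^ ((q : ℂ) - 1))
      = ((∫ x in (0:ℝ)..1, x ^ (p - 1) * (1 - x) ^ (q - 1) : ℝ) : ℂ) := by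
    rw [← intervalIntegral.integral_ofReal]
    apply intervalIntegral.integral_congr
    intro x hx
    rw [Set.uIcc_of_le (by norm_num : (0:ℝ) ≤ 1)] at hx
    show (x : ℂ) ^ ((p : ℂ) - 1) * ((1 : ℂ) - x) ^ ((q : ℂ) - 1)
      = ((x ^ (p - 1) * (1 - x) ^ (q - 1) : ℝ) : ℂ)
    rw [Complex.ofReal_mul, Complex.ofReal_cpow hx.1,
      Complex.ofReal_cpow (by linarith [hx.2] : (0:ℝ) ≤ 1 - x)]
    push_cast
    ring
  rw [hint, ← Complex.ofReal_add, Complex.Gamma_ofReal, Complex.Gamma_ofReal,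
    Complex.Gamma_ofReal, ← Complex.ofReal_mul, ← Complex.ofReal_mul] at h
  have h' : Real.Gamma p * Real.Gamma q
      = Real.Gamma (p + q) * ∫ x in (0:ℝ)..1, x ^ (p - 1) * (1 - x) ^ (q - 1) :=
    Complex.ofReal_injective h
  have hG : Real.Gamma (p + q) ≠ 0 := (Real.Gamma_pos_of_pos (by linarith)).ne'
  field_simp [hG] at h' ⊢
  linarith [h']

/-- Riemann–Liouville fractional derivative of order `α ∈ (0,1)` in `t`. -/
noncomputable def riemannLiouville (α : ℝ) (u : ℝ → ℝ) (t : ℝ) : ℝ :=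
  (1 / Real.Gamma (1 - α)) *
    deriv (fun τ => ∫ s in (0:ℝ)..τ, (τ - s) ^ (-α) * u s) t

theorem stmt19 (α a b c : ℝ) (hα0 : 0 < α) (hα1 : α < 1/2)
    (f : ℝ → ℝ) (hf1 : Differentiable ℝ f) (hf2 : Differentiable ℝ (deriv f))
    (hode : ∀ x : ℝ,
      (Real.Gamma (1 - α) / Real.Gamma (1 - 2 * α)) * f x
        = a * (deriv (deriv f) x) ^ 2 + b * deriv f x * deriv (deriv f) x
          + c * f x * deriv (deriv f) x - (2 * c / 3) * (deriv f x) ^ 2) :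
    ∀ t > (0:ℝ), ∀ x : ℝ,
      riemannLiouville α (fun s => s ^ (-α) * f x) t
        = a * (iteratedDeriv 2 (fun y => t ^ (-α) * f y) x) ^ 2
          + b * (deriv (fun y => t ^ (-α) * f y) x) *
              (iteratedDeriv 2 (fun y => t ^ (-α) * f y) x)
          + c * ((t ^ (-α) * f x) * iteratedDeriv 2 (fun y => t ^ (-α) * f y) x
              - (2/3) * (deriv (fun y => t ^ (-α) * f y) x) ^ 2) := by
  intro t ht x
  set B : ℝ := ∫ u in (0:ℝ)..1, u ^ (-α) * (1 - u) ^ (-α) with hB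
  -- value of B
  have hBval : B = Real.Gamma (1 - α) * Real.Gamma (1 - α) / Real.Gamma (2 - 2 * α) := by
    have := real_beta (p := 1 - α) (q := 1 - α) (by linarith) (by linarith)
    rw [hB]
    convert this using 2 <;> ring_nf
  -- the integral for positive τ
  have key : ∀ τ : ℝ, 0 < τ →
      (∫ s in (0:ℝ)..τ, (τ - s) ^ (-α) * (s ^ (-α) * f x))
        = (B * f x) * τ ^ (1 - 2 * α) := by
    intro τ hτ
    have h1 : (∫ s in (0:ℝ)..τ, (τ - s) ^ (-α) * (s ^ (-α) * f x))
        = (∫ s in (0:ℝ)..τ, (τ - s) ^ (-α) * s ^ (-α)) * f x := by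
      rw [← intervalIntegral.integral_mul_const]
      congr 1; funext s; ring
    have hsub := intervalIntegral.integral_comp_mul_right
      (a := 0) (b := 1) (f := fun s => (τ - s) ^ (-α) * s ^ (-α)) hτ.ne'
    simp only [zero_mul, one_mul, smul_eq_mul] at hsub
    have h2 : (∫ u in (0:ℝ)..1, (fun s => (τ - s) ^ (-α) * s ^ (-α)) (u * τ))
        = (τ ^ (-α) * τ ^ (-α)) * B := by
      rw [← intervalIntegral.integral_const_mul]
      apply intervalIntegral.integral_congr
      intro u hu
      rw [Set.uIcc_of_le (by norm_num : (0:ℝ) ≤ 1)] at hu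
      have h1u : (0:ℝ) ≤ 1 - u := by linarith [hu.2]
      show (τ - u * τ) ^ (-α) * (u * τ) ^ (-α) = τ ^ (-α) * τ ^ (-α) * (u ^ (-α) * (1 - u) ^ (-α))
      rw [show τ - u * τ = τ * (1 - u) by ring, mul_comm u τ,
        Real.mul_rpow hτ.le h1u, Real.mul_rpow hτ.le hu.1]
      ring
    rw [h2] at hsub
    have h3 : (∫ s in (0:ℝ)..τ, (τ - s) ^ (-α) * s ^ (-α))
        = τ * ((τ ^ (-α) * τ ^ (-α)) * B) := by
      rw [hsub]; field_simp
    rw [h1, h3]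
    have hτpow : τ ^ (1 - 2 * α) = τ * (τ ^ (-α) * τ ^ (-α)) := by
      rw [show (1:ℝ) - 2 * α = 1 + -α + -α by ring, Real.rpow_add hτ, Real.rpow_add hτ,
        Real.rpow_one, mul_assoc]
    rw [hτpow]; ring
  -- compute the derivative
  have hev : (fun τ => ∫ s in (0:ℝ)..τ, (τ - s) ^ (-α) * (s ^ (-α) * f x))
      =ᶠ[nhds t] fun τ => (B * f x) * τ ^ (1 - 2 * α) := by
    filter_upwards [Ioi_mem_nhds ht] with τ hτ using key τ hτ
  have hderiv : deriv (fun τ => ∫ s in (0:ℝ)..τ, (τ - s) ^ (-α) * (s ^ (-α) * f x)) t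
      = (B * f x) * ((1 - 2 * α) * t ^ (1 - 2 * α - 1)) := by
    rw [hev.deriv_eq, deriv_const_mul_field, Real.deriv_rpow_const t]
  -- spatial derivatives
  have hd1 : deriv (fun y => t ^ (-α) * f y) = fun y => t ^ (-α) * deriv f y :=
    deriv_const_mul_field' _
  have hd2 : iteratedDeriv 2 (fun y => t ^ (-α) * f y) x
      = t ^ (-α) * deriv (deriv f) x := by
    rw [show (2:ℕ) = 1 + 1 from rfl, iteratedDeriv_succ, iteratedDeriv_one, hd1,
      deriv_const_mul_field]
  have hG1 : Real.Gamma (1 - α) ≠ 0 := (Real.Gamma_pos_of_pos (by linarith)).ne'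
  have hG2 : Real.Gamma (1 - 2 * α) ≠ 0 := (Real.Gamma_pos_of_pos (by linarith)).ne'
  have hGrec : Real.Gamma (2 - 2 * α) = (1 - 2 * α) * Real.Gamma (1 - 2 * α) := by
    have := Real.Gamma_add_one (s := 1 - 2 * α) (by linarith : (0:ℝ) < 1 - 2 * α).ne'
    rw [show (2:ℝ) - 2 * α = 1 - 2 * α + 1 by ring, this]
  have ht2 : t ^ (1 - 2 * α - 1) = t ^ (-α) * t ^ (-α) := by
    rw [← Real.rpow_add ht]; ring_nf
  have h12 : (0:ℝ) < 1 - 2 * α := by linarith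
  have hmain : (1 / Real.Gamma (1 - α)) *
      (Real.Gamma (1 - α) * Real.Gamma (1 - α) / ((1 - 2 * α) * Real.Gamma (1 - 2 * α)) * f x *
        ((1 - 2 * α) * (t ^ (-α) * t ^ (-α))))
      = (t ^ (-α) * t ^ (-α)) * (Real.Gamma (1 - α) / Real.Gamma (1 - 2 * α) * f x) := by
    generalize 1 - 2 * α = k at h12 hG2 ⊢
    field_simp [h12.ne']
  unfold riemannLiouville
  rw [hderiv, hd1, hd2, hBval, hGrec, ht2, hmain, hode x]
  ring
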